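/- The dual code of a GQC code of block lengths (m_1,...,m_l) over Z4 is itself a GQC code of the same block lengths. -/

import Mathlib

/-- The simultaneous cyclic shift of each block. -/
def shiftAll {l : ℕ} (m : Fin l → ℕ) [∀ i, NeZero (m i)]
    (c : ∀ i, Fin (m i) → ZMod 4) : ∀ i, Fin (m i) → ZMod 4 :=
  fun i j => c i (j - 1)

/-- The Euclidean inner product on `(ℤ/4)^{m₁} × ⋯ × (ℤ/4)^{m_l}`. -/
def innerP {l : ℕ} (m : Fin l → ℕ) (c d : ∀ i, Fin (m i) → ZMod 4) : ZMod 4 :=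
  ∑ i, ∑ j, c i j * d i j

open Fin.CommRing in
lemma shiftAll_iterate {l : ℕ} (m : Fin l → ℕ) [∀ i, NeZero (m i)]
    (k : ℕ) (c : ∀ i, Fin (m i) → ZMod 4) (i : Fin l) (j : Fin (m i)) :
    (shiftAll m)^[k] c i j = c i (j - (k : Fin (m i))) := by
  induction k generalizing j with
  | zero => simp
  | succ n ih =>
      rw [Function.iterate_succ_apply', shiftAll, ih]
      congr 1
      push_cast
      ring

lemma iterate_mem {l : ℕ} (m : Fin l → ℕ) [∀ i, NeZero (m i)]
    (Ccode : Submodule (ZMod 4) (∀ i, Fin (m i) → ZMod 4))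
    (hC : ∀ c ∈ Ccode, shiftAll m c ∈ Ccode)
    (k : ℕ) (c : ∀ i, Fin (m i) → ZMod 4) (hc : c ∈ Ccode) :
    (shiftAll m)^[k] c ∈ Ccode := by
  induction k with
  | zero => simpa
  | succ n ih => rw [Function.iterate_succ_apply']; exact hC _ ih

open Fin.CommRing in
/-- The dual of a GQC code of block lengths `(m₁,…,m_l)` over `ℤ/4` is itself a GQC code
of the same block lengths: the set of vectors orthogonal to every codeword is a
`ℤ/4`-submodule which is closed under the simultaneous cyclic shift. -/
theorem dual_of_GQC_is_GQC (l : ℕ) (m : Fin l → ℕ) [∀ i, NeZero (m i)]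
    (hodd : ∀ i, Odd (m i))
    (Ccode : Submodule (ZMod 4) (∀ i, Fin (m i) → ZMod 4))
    (hC : ∀ c ∈ Ccode, shiftAll m c ∈ Ccode) :
    ∃ D : Submodule (ZMod 4) (∀ i, Fin (m i) → ZMod 4),
      (D : Set (∀ i, Fin (m i) → ZMod 4)) =
          {d | ∀ c ∈ Ccode, innerP m d c = 0} ∧
      ∀ d ∈ D, shiftAll m d ∈ D := by
  refine ⟨{ carrier := {d | ∀ c ∈ Ccode, innerP m d c = 0}
            zero_mem' := by intro c hc; simp [innerP]
            add_mem' := by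
              intro a b ha hb c hc
              have h1 := ha c hc
              have h2 := hb c hc
              simp only [innerP] at *
              simp [add_mul, Finset.sum_add_distrib, h1, h2]
            smul_mem' := by
              intro r a ha c hc
              have h1 := ha c hc
              simp only [innerP] at *
              simp only [Pi.smul_apply, smul_eq_mul, mul_assoc, ← Finset.mul_sum]
              rw [h1, mul_zero] }, rfl, ?_⟩
  intro d hd c hc
  set L : ℕ := ∏ i, m i with hL
  have hL1 : 1 ≤ L := Finset.one_le_prod' fun i _ => (NeZero.one_le : 1 ≤ m i)
  have hcast : ∀ i : Fin l, ((L - 1 : ℕ) : Fin (m i)) = -1 := by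
    intro i
    have hdvd : m i ∣ L := Finset.dvd_prod_of_mem m (Finset.mem_univ i)
    obtain ⟨t, ht⟩ := hdvd
    have h0 : (L : Fin (m i)) = 0 := by
      rw [ht]; push_cast [Fin.natCast_self]; ring
    rw [Nat.cast_sub hL1, h0]
    ring
  have hc' : (shiftAll m)^[L - 1] c ∈ Ccode := iterate_mem m Ccode hC _ c hc
  have key : innerP m (shiftAll m d) c = innerP m d ((shiftAll m)^[L - 1] c) := by
    unfold innerP
    refine Finset.sum_congr rfl fun i _ => ?_
    refine Fintype.sum_equiv (Equiv.subRight (1 : Fin (m i))) _ _ fun j => ?_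
    simp [shiftAll, shiftAll_iterate, hcast i, sub_add_cancel]
  rw [key]
  exact hd _ hc'
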